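/- Let β | τ² ~ N(0, (σ²/λ₂)(1−τ²)) and let τ² have the truncated inverse-gamma density on (0,1) proportional to (τ²)^{-3/2} exp{−(λ₁²/(8σ²λ₂)) τ^{-2}}. Then the marginal density of β is proportional to exp{−λ₂β²/(2σ²) − λ₁|β|/(2σ²)}, i.e., the one-dimensional commonly-scaled elastic net prior. -/

import Mathlib

open MeasureTheory Real Set

/-- The normal density with mean `0` and variance `v`. -/
noncomputable def normalPDF0 (v x : ℝ) : ℝ :=
  (Real.sqrt (2 * Real.pi * v))⁻¹ * Real.exp (-x ^ 2 / (2 * v))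


lemma schlomilch_pos {p q : ℝ} (hp : 0 < p) (hq : 0 < q) :
    ∫ x in Ioi (0:ℝ), Real.exp (-(q*x^2 + p/x^2)) =
      Real.sqrt (π/q)/2 * Real.exp (-(2*Real.sqrt (p*q))) := by
  set sp := Real.sqrt p with hsp_def
  set sq := Real.sqrt q with hsq_def
  have hsp : 0 < sp := Real.sqrt_pos.2 hp
  have hsq : 0 < sq := Real.sqrt_pos.2 hq
  have hsp2 : sp^2 = p := Real.sq_sqrt hp.le
  have hsq2 : sq^2 = q := Real.sq_sqrt hq.le
  set g : ℝ → ℝ := fun x => sq*x - sp/x with hg_def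
  -- derivative
  have hderiv : ∀ x ∈ Ioi (0:ℝ), HasDerivWithinAt g (sq + sp/x^2) (Ioi 0) x := by
    intro x hx
    have hx0 : (0:ℝ) < x := hx
    have h1 : HasDerivAt (fun y : ℝ => sq*y - sp*y⁻¹) (sq*1 - sp*(-(x^2)⁻¹)) x :=
      ((hasDerivAt_id x).const_mul sq).sub ((hasDerivAt_inv hx0.ne').const_mul sp)
    have h2 : HasDerivAt g (sq + sp/x^2) x := by
      have e : sq + sp/x^2 = sq*1 - sp*(-(x^2)⁻¹) := by field_simp; ring
      rw [hg_def, e]; simp only [div_eq_mul_inv]; exact h1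
    exact h2.hasDerivWithinAt
  -- injectivity
  have hmono : StrictMonoOn g (Ioi 0) := by
    intro x hx y hy hxy
    have hx0 : (0:ℝ) < x := hx
    have hy0 : (0:ℝ) < y := hy
    have h1 : sp/y < sp/x := div_lt_div_of_pos_left hsp hx0 hxy
    have h2 : sq*x < sq*y := by nlinarith
    simpa [hg_def] using sub_lt_sub h2 h1
  have hinj : InjOn g (Ioi 0) := hmono.injOn
  -- image
  have himg : g '' (Ioi 0) = univ := by
    apply eq_univ_of_forall
    intro y
    set r := Real.sqrt (y^2 + 4*sp*sq) with hr_def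
    have hr2 : r^2 = y^2 + 4*sp*sq := Real.sq_sqrt (by positivity)
    have hrpos : 0 < r := Real.sqrt_pos.2 (by positivity)
    have hry : -y < r := by nlinarith
    refine ⟨(y + r)/(2*sq), ?_, ?_⟩
    · have : 0 < y + r := by linarith
      exact div_pos this (by positivity)
    · have hyr : (0:ℝ) < y + r := by linarith
      simp only [hg_def]
      field_simp
      nlinarith [hr2]
  -- square of g
  have hgsq : ∀ x ∈ Ioi (0:ℝ), (g x)^2 = q*x^2 + p/x^2 - 2*sp*sq := by
    intro x hx
    have hx0 : (0:ℝ) < x := hx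
    simp only [hg_def]
    field_simp
    linear_combination x^4 * hsq2 + hsp2
  -- continuity / measurability
  have hcont : ContinuousOn g (Ioi 0) := by
    exact (continuousOn_const.mul continuousOn_id).sub
      (continuousOn_const.div continuousOn_id (fun x hx => ne_of_gt hx))
  have hcont1 : ContinuousOn (fun x => Real.exp (-(g x)^2)) (Ioi 0) :=
    Real.continuous_exp.comp_continuousOn ((hcont.pow 2).neg)
  have hmeas1 : AEStronglyMeasurable (fun x => Real.exp (-(g x)^2)) (volume.restrict (Ioi 0)) :=
    hcont1.aestronglyMeasurable measurableSet_Ioi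
  have hcontq : ContinuousOn (fun x : ℝ => sp/x^2) (Ioi 0) :=
    continuousOn_const.div (continuousOn_id.pow 2) (fun x hx => pow_ne_zero 2 (ne_of_gt hx))
  have hmeas2 : AEStronglyMeasurable (fun x => sp/x^2 * Real.exp (-(g x)^2))
      (volume.restrict (Ioi 0)) :=
    (hcontq.mul hcont1).aestronglyMeasurable measurableSet_Ioi
  -- integrability
  have int1 : IntegrableOn (fun x => Real.exp (-(g x)^2)) (Ioi 0) := by
    apply Integrable.mono'
      (((integrable_exp_neg_mul_sq hq).const_mul (Real.exp (2*sp*sq))).integrableOn) hmeas1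
    rw [ae_restrict_iff' measurableSet_Ioi]
    filter_upwards with x hx
    have hx0 : (0:ℝ) < x := hx
    rw [Real.norm_eq_abs, abs_of_pos (Real.exp_pos _), hgsq x hx, ← Real.exp_add]
    apply Real.exp_le_exp.2
    have hpx : (0:ℝ) ≤ p/x^2 := by positivity
    linarith
  have int2 : IntegrableOn (fun x => sp/x^2 * Real.exp (-(g x)^2)) (Ioi 0) := by
    apply Integrable.mono'
      (((integrable_exp_neg_mul_sq hq).const_mul (Real.exp (2*sp*sq)/sp)).integrableOn) hmeas2
    rw [ae_restrict_iff' measurableSet_Ioi]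
    filter_upwards with x hx
    have hx0 : (0:ℝ) < x := hx
    rw [Real.norm_eq_abs, abs_of_pos (by positivity), hgsq x hx]
    have key : sp/x^2 * Real.exp (-(p/x^2)) ≤ 1/sp := by
      have h1 : p/x^2 ≤ Real.exp (p/x^2) := by linarith [Real.add_one_le_exp (p/x^2)]
      have h2 : sp/x^2 ≤ Real.exp (p/x^2)/sp := by
        rw [div_le_div_iff₀ (by positivity) hsp]
        calc sp * sp = p := by nlinarith [hsp2]
          _ ≤ Real.exp (p/x^2) * x^2 := by
              rw [← div_le_iff₀ (by positivity)]; exact h1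
      calc sp/x^2 * Real.exp (-(p/x^2)) ≤ Real.exp (p/x^2)/sp * Real.exp (-(p/x^2)) := by
            gcongr
        _ = 1/sp := by rw [div_mul_eq_mul_div, ← Real.exp_add]; simp
    calc sp/x^2 * Real.exp (-(q*x^2 + p/x^2 - 2*sp*sq))
        = (Real.exp (2*sp*sq) * Real.exp (-q*x^2)) * (sp/x^2 * Real.exp (-(p/x^2))) := by
          rw [show -(q*x^2 + p/x^2 - 2*sp*sq) = (2*sp*sq + -q*x^2) + -(p/x^2) by ring,
            Real.exp_add, Real.exp_add]; ring
      _ ≤ (Real.exp (2*sp*sq) * Real.exp (-q*x^2)) * (1/sp) := by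
          apply mul_le_mul_of_nonneg_left key (by positivity)
      _ = Real.exp (2*sp*sq)/sp * Real.exp (-q*x^2) := by ring
  -- key identity 1
  have key1 : ∫ x in Ioi (0:ℝ), |sq + sp/x^2| • Real.exp (-(g x)^2) = Real.sqrt π := by
    have h := integral_image_eq_integral_abs_deriv_smul measurableSet_Ioi hderiv hinj
      (fun y => Real.exp (-y^2))
    rw [himg] at h
    rw [← h, setIntegral_univ]
    have := integral_gaussian 1
    simp only [one_mul, neg_mul] at this
    rw [this, div_one]
  -- key identity 2
  have key2 : ∫ x in Ioi (0:ℝ), sp/x^2 * Real.exp (-(g x)^2) = sq * ∫ x in Ioi (0:ℝ), Real.exp (-(g x)^2) := by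
    set s := sp/sq with hs_def
    have hs : 0 < s := div_pos hsp hsq
    have hderiv2 : ∀ x ∈ Ioi (0:ℝ), HasDerivWithinAt (fun x => s/x) (-(s/x^2)) (Ioi 0) x := by
      intro x hx
      have hx0 : (0:ℝ) < x := hx
      have h1 : HasDerivAt (fun y : ℝ => s*y⁻¹) (s*(-(x^2)⁻¹)) x :=
        (hasDerivAt_inv hx0.ne').const_mul s
      have e : -(s/x^2) = s*(-(x^2)⁻¹) := by field_simp
      have : HasDerivAt (fun y : ℝ => s/y) (-(s/x^2)) x := by
        rw [e]; simpa [div_eq_mul_inv] using h1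
      exact this.hasDerivWithinAt
    have hinj2 : InjOn (fun x : ℝ => s/x) (Ioi 0) := by
      intro x hx y hy hxy
      have hx0 : (0:ℝ) < x := hx
      have hy0 : (0:ℝ) < y := hy
      rw [div_eq_div_iff (ne_of_gt hx0) (ne_of_gt hy0)] at hxy
      exact (mul_left_cancel₀ hs.ne' hxy).symm
    have himg2 : (fun x : ℝ => s/x) '' (Ioi 0) = Ioi 0 := by
      ext y
      constructor
      · rintro ⟨x, hx, rfl⟩
        exact div_pos hs hx
      · intro hy
        have hy0 : (0:ℝ) < y := hy
        exact ⟨s/y, div_pos hs hy0, by field_simp⟩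
    have h := integral_image_eq_integral_abs_deriv_smul measurableSet_Ioi hderiv2 hinj2
      (fun y => Real.exp (-(g y)^2))
    rw [himg2] at h
    have hpt : EqOn (fun x => |(-(s/x^2))| • Real.exp (-(g (s/x))^2))
        (fun x => s/x^2 * Real.exp (-(g x)^2)) (Ioi 0) := by
      intro x hx
      have hx0 : (0:ℝ) < x := hx
      have habs : |(-(s/x^2))| = s/x^2 := by
        rw [abs_neg, abs_of_pos (by positivity)]
      have hgg : g (s/x) = -(g x) := by
        simp only [hg_def, hs_def]
        field_simp
        ring
      simp only [habs, hgg, neg_neg, smul_eq_mul, neg_sq]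
    rw [setIntegral_congr_fun measurableSet_Ioi hpt] at h
    have hpt2 : EqOn (fun x => sp/x^2 * Real.exp (-(g x)^2))
        (fun x => sq * (s/x^2 * Real.exp (-(g x)^2))) (Ioi 0) := by
      intro x hx
      have hx0 : (0:ℝ) < x := hx
      simp only [hs_def]
      field_simp
    rw [setIntegral_congr_fun measurableSet_Ioi hpt2, integral_const_mul, ← h]
  -- combine
  have habs' : EqOn (fun x => |sq + sp/x^2| • Real.exp (-(g x)^2))
      (fun x => sq * Real.exp (-(g x)^2) + sp/x^2 * Real.exp (-(g x)^2)) (Ioi 0) := by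
    intro x hx
    have hx0 : (0:ℝ) < x := hx
    simp only [smul_eq_mul]
    rw [abs_of_pos (by positivity)]
    ring
  rw [setIntegral_congr_fun measurableSet_Ioi habs',
    integral_add (int1.const_mul sq) int2, integral_const_mul, key2] at key1
  have hJval : (∫ x in Ioi (0:ℝ), Real.exp (-(g x)^2)) = Real.sqrt π / (2*sq) := by
    field_simp
    linarith [key1]
  have hfin : EqOn (fun x => Real.exp (-(q*x^2 + p/x^2)))
      (fun x => Real.exp (-(2*sp*sq)) * Real.exp (-(g x)^2)) (Ioi 0) := by
    intro x hx
    simp only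
    rw [← Real.exp_add]
    congr 1
    have := hgsq x hx
    linarith
  rw [setIntegral_congr_fun measurableSet_Ioi hfin, integral_const_mul, hJval,
    Real.sqrt_div pi_pos.le, Real.sqrt_mul hp.le]
  simp only [hsp_def, hsq_def]
  ring

lemma schlomilch {p q : ℝ} (hp : 0 ≤ p) (hq : 0 < q) :
    ∫ x in Ioi (0:ℝ), Real.exp (-(q*x^2 + p/x^2)) =
      Real.sqrt (π/q)/2 * Real.exp (-(2*Real.sqrt (p*q))) := by
  rcases hp.eq_or_lt with h | h
  · simp only [← h, zero_div, add_zero, zero_mul, Real.sqrt_zero, mul_zero, neg_zero,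
      Real.exp_zero, mul_one]
    have := integral_gaussian_Ioi q
    simp only [neg_mul] at this
    rw [← this]
  · exact schlomilch_pos h hq

/-- The scale-mixture-of-normals representation of the commonly-scaled elastic net prior:
mixing `N(0, (σ²/λ₂)(1-t))` over the truncated inverse-gamma density on `(0,1)` proportional
to `t^{-3/2} exp{-(λ₁²/(8σ²λ₂))/t}` yields a marginal density proportional to
`exp{-λ₂β²/(2σ²) - λ₁|β|/(2σ²)}`. -/
theorem elastic_net_scale_mixture_common (lam1 lam2 sig2 : ℝ)
    (h1 : 0 < lam1) (h2 : 0 < lam2) (hs : 0 < sig2) :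
    ∃ C : ℝ, 0 < C ∧ ∀ β : ℝ,
      (∫ t in Set.Ioo (0 : ℝ) 1,
          normalPDF0 (sig2 / lam2 * (1 - t)) β *
            (t ^ (-(3 : ℝ) / 2) * Real.exp (-(lam1 ^ 2 / (8 * sig2 * lam2)) / t)))
        = C * Real.exp (-(lam2 * β ^ 2) / (2 * sig2) - lam1 * |β| / (2 * sig2)) := by
  set v := sig2 / lam2 with hv
  have hvpos : 0 < v := div_pos hs h2
  set a := lam1 ^ 2 / (8 * sig2 * lam2) with ha
  have hapos : 0 < a := by positivity
  have hpi := Real.pi_pos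
  refine ⟨2 * (Real.sqrt (2*π*v))⁻¹ * (Real.sqrt (π/a)/2) * Real.exp (-a), by positivity, ?_⟩
  intro β
  set p := β ^ 2 / (2*v) with hp
  have hppos : 0 ≤ p := by positivity
  set φ : ℝ → ℝ := fun w => (1+w^2)⁻¹ with hφ
  have hderiv : ∀ w ∈ Ioi (0:ℝ), HasDerivWithinAt φ (-(2*w)/(1+w^2)^2) (Ioi 0) w := by
    intro w hw
    have h1 : HasDerivAt (fun w : ℝ => 1 + w^2) (2*w) w := by
      simpa using (hasDerivAt_pow 2 w).const_add 1
    exact (h1.inv (by positivity)).hasDerivWithinAt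
  have hinj : InjOn φ (Ioi 0) := by
    intro x hx y hy hxy
    have hx0 : (0:ℝ) < x := hx
    have hy0 : (0:ℝ) < y := hy
    have h3 : 1 + x^2 = 1 + y^2 := inv_inj.mp hxy
    have h4 : x^2 = y^2 := by linarith
    exact le_antisymm (by nlinarith) (by nlinarith)
  have himg : φ '' (Ioi 0) = Ioo 0 1 := by
    ext t
    constructor
    · rintro ⟨w, hw, rfl⟩
      have hw0 : (0:ℝ) < w := hw
      refine ⟨by positivity, ?_⟩
      rw [hφ]
      have h5 : (1:ℝ) < 1 + w^2 := by nlinarith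
      exact inv_lt_one_of_one_lt₀ h5
    · rintro ⟨ht0, ht1⟩
      refine ⟨Real.sqrt ((1-t)/t), Real.sqrt_pos.2 (div_pos (by linarith) ht0), ?_⟩
      have hsq : Real.sqrt ((1-t)/t)^2 = (1-t)/t :=
        Real.sq_sqrt (div_nonneg (by linarith) ht0.le)
      simp only [hφ]
      rw [hsq]
      have h6 : 1 + (1-t)/t = 1/t := by field_simp; ring
      rw [h6, one_div, inv_inv]
  have hchg := integral_image_eq_integral_abs_deriv_smul measurableSet_Ioi hderiv hinj
      (fun t => normalPDF0 (v*(1-t)) β * (t ^ (-(3:ℝ)/2) * Real.exp (-a/t)))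
  rw [himg] at hchg
  rw [hchg]
  have hpt : EqOn
      (fun w => |(-(2*w)/(1+w^2)^2)| •
        (normalPDF0 (v*(1-φ w)) β * ((φ w) ^ (-(3:ℝ)/2) * Real.exp (-a/(φ w)))))
      (fun w => (2*(Real.sqrt (2*π*v))⁻¹ * Real.exp (-p-a)) * Real.exp (-(a*w^2 + p/w^2)))
      (Ioi 0) := by
    intro w hw
    have hw0 : (0:ℝ) < w := hw
    have hu : (0:ℝ) < 1 + w^2 := by positivity
    have habs : |(-(2*w)/(1+w^2)^2)| = 2*w/(1+w^2)^2 := by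
      rw [neg_div, abs_neg, abs_of_pos (by positivity)]
    simp only [smul_eq_mul, habs, hφ, normalPDF0]
    have f1 : v * (1 - (1+w^2)⁻¹) = v*w^2/(1+w^2) := by field_simp; ring
    rw [f1]
    have f2 : 2*π*(v*w^2/(1+w^2)) = (2*π*v) * (w^2/(1+w^2)) := by ring
    rw [f2, Real.sqrt_mul (by positivity), Real.sqrt_div (sq_nonneg w), Real.sqrt_sq hw0.le]
    have f3 : ((1+w^2)⁻¹) ^ (-(3:ℝ)/2) = (1+w^2) * Real.sqrt (1+w^2) := by
      rw [show (-(3:ℝ)/2) = -(3/2 : ℝ) by norm_num, Real.inv_rpow hu.le, Real.rpow_neg hu.le,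
        inv_inv, show ((3:ℝ)/2) = 1 + 1/2 by norm_num, Real.rpow_add hu, Real.rpow_one,
        ← Real.sqrt_eq_rpow]
    have f4 : -a/(1+w^2)⁻¹ = -a*(1+w^2) := by rw [div_eq_mul_inv, inv_inv]
    rw [f3, f4]
    set su := Real.sqrt (1+w^2) with hsu_def
    have hsu : 0 < su := Real.sqrt_pos.2 hu
    have hsu2 : su^2 = 1+w^2 := Real.sq_sqrt hu.le
    set s2 := Real.sqrt (2*π*v) with hs2_def
    have hs2 : 0 < s2 := Real.sqrt_pos.2 (by positivity)
    have f5 : Real.exp (-β^2/(2*(v*w^2/(1+w^2)))) * Real.exp (-a*(1+w^2)) =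
        Real.exp (-p-a) * Real.exp (-(a*w^2+p/w^2)) := by
      rw [← Real.exp_add, ← Real.exp_add]
      congr 1
      rw [hp]
      field_simp
      ring
    calc 2*w/(1+w^2)^2 * ((s2 * (w/su))⁻¹ * Real.exp (-β^2/(2*(v*w^2/(1+w^2)))) *
          ((1+w^2)*su * Real.exp (-a*(1+w^2))))
        = (2*s2⁻¹) * (Real.exp (-β^2/(2*(v*w^2/(1+w^2)))) * Real.exp (-a*(1+w^2))) := by
          rw [← hsu2]
          field_simp
      _ = (2*s2⁻¹) * (Real.exp (-p-a) * Real.exp (-(a*w^2+p/w^2))) := by rw [f5]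
      _ = (2*s2⁻¹ * Real.exp (-p-a)) * Real.exp (-(a*w^2+p/w^2)) := by ring
  rw [setIntegral_congr_fun measurableSet_Ioi hpt, integral_const_mul, schlomilch hppos hapos]
  have h2s : 2*Real.sqrt (p*a) = lam1*|β|/(2*sig2) := by
    have e : p*a = (lam1*|β|/(4*sig2))^2 := by
      rw [hp, ha, hv]
      rw [div_pow, mul_pow, sq_abs]
      field_simp
      ring
    rw [e, Real.sqrt_sq (by positivity)]
    ring
  have hps : p = lam2*β^2/(2*sig2) := by
    rw [hp, hv]
    field_simp
  have hexp : -(lam2*β^2)/(2*sig2) - lam1*|β|/(2*sig2) = -p - 2*Real.sqrt (p*a) := by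
    rw [h2s, hps]
    ring
  rw [hexp]
  rw [show (-p-a : ℝ) = -a + (-p - 2*Real.sqrt (p*a)) + 2*Real.sqrt (p*a) by ring]
  rw [Real.exp_add, Real.exp_add, show (-(2*Real.sqrt (p*a)) : ℝ) = -(2*Real.sqrt (p*a)) by rfl]
  rw [Real.exp_neg (2*Real.sqrt (p*a))]
  field_simp
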